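/- Let R be a ℚ-algebra and for an infinite tuple t = (t_0, t_1, ...) define the formal power series B_t(v) = v − Σ_{i≥0} (t_i / i!) v^i. For φ ∈ G (power series V + O(V²)) with a chosen square root √(φ'(V)) ∈ 1 + V R[[V]], define the action t ↦ t.φ = T by B_T(V) = √(φ'(V)) · B_t(φ(V)). Then this defines a right group action: t.(φ∘ψ) = (t.φ).ψ for all φ, ψ ∈ G, and t.id = t. -/

import Mathlib

/-- Formal derivative of a power series. -/
noncomputable def d1 {R : Type*} [CommRing R] (f : PowerSeries R) : PowerSeries R :=
  PowerSeries.mk fun n => (n + 1 : ℕ) • PowerSeries.coeff (n + 1) f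

/-- Composition of formal power series `f(g(V))` (genuine composition whenever `g` has
zero constant term). -/
noncomputable def pcomp {R : Type*} [CommRing R] (f g : PowerSeries R) : PowerSeries R :=
  PowerSeries.mk fun n => ∑ᶠ k : ℕ, PowerSeries.coeff k f * PowerSeries.coeff n (g ^ k)

/-- `B_t(v) = v - ∑_{i≥0} (t_i / i!) v^i`. -/
noncomputable def Bser {R : Type*} [CommRing R] [Algebra ℚ R] (t : ℕ → R) : PowerSeries R :=
  PowerSeries.mk fun i => (if i = 1 then (1 : R) else 0) - (i.factorial : ℚ)⁻¹ • t i

namespace TupleActionAux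

open PowerSeries Finset

variable {R : Type*} [CommRing R]


lemma coeff_pow_zero {g : PowerSeries R} (hg : constantCoeff g = 0)
    {k n : ℕ} (h : n < k) : coeff n (g ^ k) = 0 := by
  have hd : (X : PowerSeries R) ^ k ∣ g ^ k :=
    pow_dvd_pow_of_dvd (X_dvd_iff.mpr hg) k
  exact (X_pow_dvd_iff.mp hd) n h

lemma coeff_pcomp {g : PowerSeries R} (hg : constantCoeff g = 0) (f : PowerSeries R) (n : ℕ) :
    coeff n (pcomp f g) = ∑ k ∈ range (n + 1), coeff k f * coeff n (g ^ k) := by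
  rw [pcomp, coeff_mk]
  apply finsum_eq_finset_sum_of_support_subset
  intro k hk
  simp only [Function.mem_support] at hk
  simp only [coe_range, Set.mem_Iio]
  by_contra h
  push_neg at h
  exact hk (by rw [coeff_pow_zero hg (lt_of_lt_of_le (Nat.lt_succ_self n) h), mul_zero])

lemma constantCoeff_pcomp {g : PowerSeries R} (hg : constantCoeff g = 0) (f : PowerSeries R) :
    constantCoeff (pcomp f g) = constantCoeff f := by
  rw [← coeff_zero_eq_constantCoeff_apply, coeff_pcomp hg]
  simp

lemma pcomp_one {g : PowerSeries R} (hg : constantCoeff g = 0) :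
    pcomp (1 : PowerSeries R) g = 1 := by
  ext n
  rw [coeff_pcomp hg]
  rw [Finset.sum_eq_single 0]
  · simp
  · intro k _ hk; simp [coeff_one, hk]
  · simp

lemma pcomp_X_right (f : PowerSeries R) : pcomp f X = f := by
  ext n
  rw [coeff_pcomp (constantCoeff_X) f]
  rw [Finset.sum_eq_single n]
  · simp [coeff_X_pow]
  · intro k _ hk; simp [coeff_X_pow, Ne.symm hk]
  · intro h; exact absurd (self_mem_range_succ n) h

lemma coeff_eval₂ {g : PowerSeries R} (hg : constantCoeff g = 0) (P : Polynomial R) (n : ℕ) :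
    coeff n (P.eval₂ C g) = ∑ k ∈ range (n + 1), P.coeff k * coeff n (g ^ k) := by
  rw [Polynomial.eval₂_eq_sum, Polynomial.sum, map_sum]
  have h1 : ∀ k ∈ P.support, coeff n (C (P.coeff k) * g ^ k)
      = P.coeff k * coeff n (g ^ k) := by
    intro k _; rw [coeff_C_mul]
  rw [Finset.sum_congr rfl h1]
  rw [show (∑ k ∈ P.support, P.coeff k * coeff n (g ^ k))
      = ∑ k ∈ P.support ∩ range (n + 1), P.coeff k * coeff n (g ^ k) from
    (Finset.sum_subset (Finset.inter_subset_left) (by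
      intro k hk hk2
      have : ¬ k < n + 1 := fun h => hk2 (Finset.mem_inter.mpr ⟨hk, Finset.mem_range.mpr h⟩)
      rw [coeff_pow_zero hg (lt_of_lt_of_le (Nat.lt_succ_self n) (not_lt.mp this)), mul_zero])).symm]
  apply Finset.sum_subset (Finset.inter_subset_right)
  intro k _ hk2
  have : P.coeff k = 0 := by
    by_contra h
    exact hk2 (Finset.mem_inter.mpr ⟨Polynomial.mem_support_iff.mpr h, by
      exact (by assumption : k ∈ range (n+1))⟩)
  rw [this, zero_mul]

lemma coeff_pcomp_trunc {g : PowerSeries R} (hg : constantCoeff g = 0)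
    (f : PowerSeries R) {m n : ℕ} (hmn : n < m) :
    coeff n (pcomp f g) = coeff n ((trunc m f).eval₂ C g) := by
  rw [coeff_pcomp hg, coeff_eval₂ hg]
  apply Finset.sum_congr rfl
  intro k hk
  rw [PowerSeries.coeff_trunc, if_pos (lt_of_lt_of_le (Finset.mem_range.mp hk) hmn)]

lemma pcomp_mul {g : PowerSeries R} (hg : constantCoeff g = 0) (f₁ f₂ : PowerSeries R) :
    pcomp (f₁ * f₂) g = pcomp f₁ g * pcomp f₂ g := by
  ext n
  set P₁ := trunc (n + 1) f₁
  set P₂ := trunc (n + 1) f₂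
  have key : coeff n (pcomp (f₁ * f₂) g) = coeff n ((P₁ * P₂).eval₂ C g) := by
    rw [coeff_pcomp hg, coeff_eval₂ hg]
    apply Finset.sum_congr rfl
    intro k hk
    have hk' : k < n + 1 := Finset.mem_range.mp hk
    congr 1
    rw [PowerSeries.coeff_mul, Polynomial.coeff_mul]
    apply Finset.sum_congr rfl
    intro p hp
    have hp' : p.1 + p.2 = k := Finset.HasAntidiagonal.mem_antidiagonal.mp hp
    have h1 : p.1 < n + 1 := lt_of_le_of_lt (le_of_le_of_eq (Nat.le_add_right _ _) hp') hk'
    have h2 : p.2 < n + 1 := lt_of_le_of_lt (le_of_le_of_eq (Nat.le_add_left _ _) hp') hk'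
    rw [PowerSeries.coeff_trunc, PowerSeries.coeff_trunc, if_pos h1, if_pos h2]
  rw [key, Polynomial.eval₂_mul, PowerSeries.coeff_mul, PowerSeries.coeff_mul]
  apply Finset.sum_congr rfl
  intro p hp
  have hp' : p.1 + p.2 = n := Finset.HasAntidiagonal.mem_antidiagonal.mp hp
  have h1 : p.1 < n + 1 := Nat.lt_succ_of_le (le_of_le_of_eq (Nat.le_add_right _ _) hp')
  have h2 : p.2 < n + 1 := Nat.lt_succ_of_le (le_of_le_of_eq (Nat.le_add_left _ _) hp')
  rw [coeff_pcomp_trunc hg f₁ h1, coeff_pcomp_trunc hg f₂ h2]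

lemma pcomp_pow {g : PowerSeries R} (hg : constantCoeff g = 0) (f : PowerSeries R) (k : ℕ) :
    pcomp (f ^ k) g = (pcomp f g) ^ k := by
  induction k with
  | zero => simpa using pcomp_one hg
  | succ k ih => rw [pow_succ, pow_succ, pcomp_mul hg, ih]

lemma pcomp_assoc {g h : PowerSeries R} (hg : constantCoeff g = 0)
    (hh : constantCoeff h = 0) (f : PowerSeries R) :
    pcomp (pcomp f g) h = pcomp f (pcomp g h) := by
  have hgh : constantCoeff (pcomp g h) = 0 := by rw [constantCoeff_pcomp hh, hg]
  ext n
  rw [coeff_pcomp hh, coeff_pcomp hgh]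
  have step1 : ∀ k ∈ range (n + 1),
      coeff k (pcomp f g) * coeff n (h ^ k)
      = ∑ j ∈ range (n + 1), coeff j f * (coeff k (g ^ j) * coeff n (h ^ k)) := by
    intro k hk
    rw [coeff_pcomp hg, Finset.sum_mul]
    have hkn : k + 1 ≤ n + 1 := Nat.succ_le_succ (Nat.lt_succ_iff.mp (Finset.mem_range.mp hk))
    rw [← Finset.sum_subset (Finset.range_subset_range.mpr hkn) (by
      intro j _ hj
      have : k < j := by
        by_contra hc
        exact hj (Finset.mem_range.mpr (by omega))
      simp [coeff_pow_zero hg this])]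
    apply Finset.sum_congr rfl
    intro j _; ring
  rw [Finset.sum_congr rfl step1, Finset.sum_comm]
  apply Finset.sum_congr rfl
  intro j _
  rw [← Finset.mul_sum]
  rw [← pcomp_pow hh, coeff_pcomp hh]

lemma d1_eq (f : PowerSeries R) : d1 f = derivativeFun f := by
  ext n
  rw [show f.derivativeFun = derivative R f from rfl]
  simp only [d1, coeff_mk, coeff_derivativeFun, nsmul_eq_mul]
  push_cast; ring

lemma d1_X : d1 (X : PowerSeries R) = 1 := by
  ext n
  cases n with
  | zero => simp [d1, coeff_X, coeff_one]
  | succ n => simp [d1, coeff_X, coeff_one]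

lemma d1_pow (g : PowerSeries R) (k : ℕ) :
    d1 (g ^ (k + 1)) = (k + 1 : ℕ) • (g ^ k * d1 g) := by
  induction k with
  | zero => simp
  | succ k ih =>
    rw [pow_succ, d1_eq, derivativeFun_mul, ← d1_eq, ← d1_eq, ih]
    simp only [smul_eq_mul, nsmul_eq_mul]
    push_cast; ring

lemma d1_pcomp {g : PowerSeries R} (hg : constantCoeff g = 0) (f : PowerSeries R) :
    d1 (pcomp f g) = pcomp (d1 f) g * d1 g := by
  ext n
  have hL : coeff n (d1 (pcomp f g))
      = ∑ k ∈ range (n + 2), coeff k f * ((n + 1 : ℕ) • coeff (n + 1) (g ^ k)) := by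
    rw [d1, coeff_mk, coeff_pcomp hg, Finset.smul_sum]
    exact Finset.sum_congr rfl fun k _ => (mul_smul_comm _ _ _).symm
  rw [hL]
  have hterm : ∀ k, coeff k f * ((n + 1 : ℕ) • coeff (n + 1) (g ^ k))
      = coeff k f * coeff n (d1 (g ^ k)) := by
    intro k; rw [d1, coeff_mk]
  rw [Finset.sum_congr rfl fun k _ => hterm k, Finset.sum_range_succ']
  have h0 : coeff 0 f * coeff n (d1 ((g : PowerSeries R) ^ 0)) = 0 := by
    simp [d1, coeff_one]
  rw [h0, add_zero]
  have hLL : ∀ k, coeff (k + 1) f * coeff n (d1 (g ^ (k + 1)))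
      = coeff (k + 1) f * ((k + 1 : ℕ) • coeff n (g ^ k * d1 g)) := by
    intro k; rw [d1_pow, map_nsmul]
  rw [Finset.sum_congr rfl fun k _ => hLL k]
  -- now the right-hand side
  rw [PowerSeries.coeff_mul]
  have hR : ∀ p ∈ antidiagonal n,
      coeff p.1 (pcomp (d1 f) g) * coeff p.2 (d1 g)
      = ∑ k ∈ range (n + 1), coeff k (d1 f) * (coeff p.1 (g ^ k) * coeff p.2 (d1 g)) := by
    intro p hp
    have hp' : p.1 + p.2 = n := Finset.HasAntidiagonal.mem_antidiagonal.mp hp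
    have h1 : p.1 + 1 ≤ n + 1 := Nat.succ_le_succ (le_of_le_of_eq (Nat.le_add_right _ _) hp')
    rw [coeff_pcomp hg, Finset.sum_mul]
    rw [← Finset.sum_subset (Finset.range_subset_range.mpr h1) (by
      intro k _ hk
      have : p.1 < k := by
        by_contra hc
        exact hk (Finset.mem_range.mpr (by omega))
      simp [coeff_pow_zero hg this])]
    exact Finset.sum_congr rfl fun k _ => by ring
  rw [Finset.sum_congr rfl hR, Finset.sum_comm]
  apply Finset.sum_congr rfl
  intro k _
  rw [← Finset.mul_sum, ← PowerSeries.coeff_mul]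
  have hk : coeff k (d1 f) = (k + 1 : ℕ) • coeff (k + 1) f := by rw [d1, coeff_mk]
  rw [hk, smul_mul_assoc, mul_smul_comm]

lemma sqrt_unique [Algebra ℚ R] {a b : PowerSeries R} (h : a ^ 2 = b ^ 2)
    (ha : constantCoeff a = 1) (hb : constantCoeff b = 1) : a = b := by
  have h2 : IsUnit (2 : R) := by
    have := (isUnit_iff_ne_zero.mpr (two_ne_zero (α := ℚ))).map (algebraMap ℚ R)
    rwa [map_ofNat] at this
  have hab : IsUnit (a + b) := isUnit_iff_constantCoeff.mpr (by
    rw [map_add, ha, hb, one_add_one_eq_two]; exact h2)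
  have hz : (a - b) * (a + b) = 0 * (a + b) := by
    have : (a - b) * (a + b) = a ^ 2 - b ^ 2 := by ring
    rw [this, h, sub_self, zero_mul]
  have := hab.mul_right_cancel hz
  rw [sub_eq_zero] at this
  exact this

end TupleActionAux

open TupleActionAux PowerSeries

/-- Let `R` be a ℚ-algebra, and let `sq` assign to each `φ ∈ G`
(i.e. `φ = V + O(V²)`) its square root `√(φ') ∈ 1 + V·R⟦V⟧` of the derivative
(characterized by `(sq φ)² = φ'` and constant coefficient `1`).  Define the action
`t ↦ t.φ = act t φ` on infinite tuples by `B_{t.φ}(V) = √(φ'(V)) · B_t(φ(V))`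
(reading off the tuple from the coefficients of `B`).  Then this is a right group
action: `(t.φ).ψ = t.(φ∘ψ)` for all `φ, ψ ∈ G`, and `t.id = t`. -/
theorem groupaction_on_tuples {R : Type*} [CommRing R] [Algebra ℚ R]
    (sq : PowerSeries R → PowerSeries R)
    (hsq : ∀ φ : PowerSeries R, PowerSeries.constantCoeff φ = 0 →
      PowerSeries.coeff 1 φ = 1 →
      (sq φ) ^ 2 = d1 φ ∧ PowerSeries.constantCoeff (sq φ) = 1)
    (act : (ℕ → R) → PowerSeries R → (ℕ → R))
    (hact : ∀ t φ i, act t φ i = (i.factorial : ℚ) •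
      ((if i = 1 then (1 : R) else 0) - PowerSeries.coeff i (sq φ * pcomp (Bser t) φ)))
    (φ ψ : PowerSeries R)
    (hφ0 : PowerSeries.constantCoeff φ = 0) (hφ1 : PowerSeries.coeff 1 φ = 1)
    (hψ0 : PowerSeries.constantCoeff ψ = 0) (hψ1 : PowerSeries.coeff 1 ψ = 1)
    (t : ℕ → R) :
    act (act t φ) ψ = act t (pcomp φ ψ) ∧ act t PowerSeries.X = t := by
  have hB : ∀ (s : ℕ → R) (χ : PowerSeries R),
      Bser (act s χ) = sq χ * pcomp (Bser s) χ := by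
    intro s χ
    ext i
    rw [Bser, coeff_mk, hact, smul_smul,
      inv_mul_cancel₀ (Nat.cast_ne_zero.mpr i.factorial_ne_zero), one_smul, sub_sub_cancel]
  obtain ⟨hφsq, hφc⟩ := hsq φ hφ0 hφ1
  obtain ⟨hψsq, hψc⟩ := hsq ψ hψ0 hψ1
  have hχ0 : constantCoeff (pcomp φ ψ) = 0 := by rw [constantCoeff_pcomp hψ0, hφ0]
  have hχ1 : PowerSeries.coeff 1 (pcomp φ ψ) = 1 := by
    rw [coeff_pcomp hψ0, Finset.sum_range_succ, Finset.sum_range_one]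
    rw [coeff_zero_eq_constantCoeff_apply, hφ0, pow_one, hφ1, hψ1]
    ring
  obtain ⟨hχsq, hχc⟩ := hsq _ hχ0 hχ1
  have hsqχ : sq (pcomp φ ψ) = pcomp (sq φ) ψ * sq ψ := by
    apply sqrt_unique
    · rw [hχsq, d1_pcomp hψ0, mul_pow, ← pcomp_pow hψ0, hφsq, hψsq]
    · exact hχc
    · rw [map_mul, constantCoeff_pcomp hψ0, hφc, hψc, mul_one]
  constructor
  · funext i
    have key : sq ψ * pcomp (Bser (act t φ)) ψ
        = sq (pcomp φ ψ) * pcomp (Bser t) (pcomp φ ψ) := by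
      rw [hB t φ, pcomp_mul hψ0, hsqχ, ← pcomp_assoc hφ0 hψ0]
      ring
    rw [hact, hact, key]
  · have hsqX : sq (X : PowerSeries R) = 1 := by
      obtain ⟨hXsq, hXc⟩ := hsq X constantCoeff_X coeff_one_X
      exact sqrt_unique (by rw [hXsq, d1_X, one_pow]) hXc constantCoeff_one
    funext i
    rw [hact, hsqX, one_mul, pcomp_X_right, Bser, coeff_mk, sub_sub_cancel, smul_smul,
      mul_inv_cancel₀ (Nat.cast_ne_zero.mpr i.factorial_ne_zero), one_smul]
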